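/- If a smooth curve γ : (-δ,δ) → ℝⁿ satisfies γ(0) = 0 and γ''(0) ≠ 0 with γ'(0) ≠ 0 and γ''(0) not parallel to γ'(0), then there exists ε > 0 such that for every line L through the origin, γ restricted to (-ε,ε) intersects L in at most two points. Consequently, if for arbitrarily small ε there exists a line through 0 meeting γ|(-ε,ε) in at least three points (namely γ(-ε), 0, γ(ε)), then γ''(0) is a multiple of γ'(0). -/

import Mathlib

open Set Filter Topology

private lemma auxL1 {ε : ℝ} (hε : 0 < ε) {f f' : ℝ → ℝ} (hf0 : f 0 = 0)
    (hd : ∀ t ∈ Ioo (-ε) ε, HasDerivAt f (f' t) t)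
    (hge : ∀ t ∈ Ioo (-ε) ε, (1:ℝ)/2 ≤ f' t) :
    ∀ t ∈ Ioo (-ε) ε, (0 ≤ t → t/2 ≤ f t) ∧ (t ≤ 0 → f t ≤ t/2) := by
  have h0 : (0:ℝ) ∈ Ioo (-ε) ε := ⟨by linarith, hε⟩
  have hmono : MonotoneOn (fun t => f t - t/2) (Ioo (-ε) ε) := by
    apply monotoneOn_of_deriv_nonneg (convex_Ioo _ _)
    · intro t ht
      exact ((hd t ht).sub ((hasDerivAt_id' t).div_const 2)).continuousAt.continuousWithinAt
    · intro t ht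
      rw [interior_Ioo] at ht
      exact ((hd t ht).sub ((hasDerivAt_id' t).div_const 2)).differentiableAt.differentiableWithinAt
    · intro t ht
      rw [interior_Ioo] at ht
      rw [(show HasDerivAt (fun t => f t - t/2) (f' t - 1/2) t from (hd t ht).sub ((hasDerivAt_id' t).div_const 2)).deriv]
      have := hge t ht; linarith
  intro t ht
  constructor
  · intro h
    have := hmono h0 ht h
    simp only [hf0] at this; linarith
  · intro h
    have := hmono ht h0 h
    simp only [hf0] at this; linarith

private lemma auxL2 {ε : ℝ} {f f' : ℝ → ℝ} (hf0 : f 0 = 0)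
    (hd : ∀ t ∈ Ioo (-ε) ε, HasDerivAt f (f' t) t)
    (hpos : ∀ t ∈ Ioo (-ε) ε, 0 < t → 0 < f' t)
    (hneg : ∀ t ∈ Ioo (-ε) ε, t < 0 → f' t < 0) :
    ∀ t ∈ Ioo (-ε) ε, t ≠ 0 → 0 < f t := by
  intro t ht hne
  rcases hne.lt_or_gt with h | h
  · have hsub : Icc t (0:ℝ) ⊆ Ioo (-ε) ε := by
      intro x hx
      exact ⟨lt_of_lt_of_le ht.1 hx.1, lt_of_le_of_lt hx.2 (by linarith [ht.1])⟩
    have hanti : StrictAntiOn f (Icc t 0) := by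
      apply strictAntiOn_of_deriv_neg (convex_Icc _ _)
      · exact fun x hx => (hd x (hsub hx)).continuousAt.continuousWithinAt
      · intro x hx
        rw [interior_Icc] at hx
        rw [(hd x (hsub (Ioo_subset_Icc_self hx))).deriv]
        exact hneg x (hsub (Ioo_subset_Icc_self hx)) hx.2
    have := hanti (left_mem_Icc.2 h.le) (right_mem_Icc.2 h.le) h
    rwa [hf0] at this
  · have hsub : Icc (0:ℝ) t ⊆ Ioo (-ε) ε := by
      intro x hx
      exact ⟨lt_of_lt_of_le (by linarith [ht.2]) hx.1, lt_of_le_of_lt hx.2 ht.2⟩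
    have hmono : StrictMonoOn f (Icc 0 t) := by
      apply strictMonoOn_of_deriv_pos (convex_Icc _ _)
      · exact fun x hx => (hd x (hsub hx)).continuousAt.continuousWithinAt
      · intro x hx
        rw [interior_Icc] at hx
        rw [(hd x (hsub (Ioo_subset_Icc_self hx))).deriv]
        exact hpos x (hsub (Ioo_subset_Icc_self hx)) hx.1
    have := hmono (left_mem_Icc.2 h.le) (right_mem_Icc.2 h.le) h
    rwa [hf0] at this

open RealInnerProductSpace in
private lemma exists_dual_pair {E : Type*} [NormedAddCommGroup E] [InnerProductSpace ℝ E]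
    {v w : E} (hv : v ≠ 0) (hw : w ≠ 0) (hnp : ∀ c : ℝ, w ≠ c • v) :
    ∃ α β : E →L[ℝ] ℝ, α v = 1 ∧ α w = 0 ∧ β v = 0 ∧ β w = 1 := by
  have hvv : ⟪v, v⟫ ≠ 0 := fun h => hv (inner_self_eq_zero.1 h)
  have hww : ⟪w, w⟫ ≠ 0 := fun h => hw (inner_self_eq_zero.1 h)
  set v' := v - (⟪w, v⟫ / ⟪w, w⟫) • w with hv'def
  set w' := w - (⟪v, w⟫ / ⟪v, v⟫) • v with hw'def
  have hwv' : ⟪w, v'⟫ = 0 := by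
    rw [hv'def, inner_sub_right, real_inner_smul_right, div_mul_cancel₀ _ hww, sub_self]
  have hvw' : ⟪v, w'⟫ = 0 := by
    rw [hw'def, inner_sub_right, real_inner_smul_right, div_mul_cancel₀ _ hvv, sub_self]
  have hv'w : ⟪v', w⟫ = 0 := by rw [real_inner_comm]; exact hwv'
  have hw'v : ⟪w', v⟫ = 0 := by rw [real_inner_comm]; exact hvw'
  have hv'ne : v' ≠ 0 := by
    intro h
    obtain ⟨c, hveq⟩ : ∃ c : ℝ, v = c • w := ⟨_, by rwa [hv'def, sub_eq_zero] at h⟩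
    have hc : c ≠ 0 := fun h0 => hv (by rw [hveq, h0, zero_smul])
    exact hnp c⁻¹ (by rw [hveq, smul_smul, inv_mul_cancel₀ hc, one_smul])
  have hw'ne : w' ≠ 0 := by
    intro h
    exact hnp (⟪v, w⟫ / ⟪v, v⟫) (by rwa [hw'def, sub_eq_zero] at h)
  have hv'v' : ⟪v', v'⟫ ≠ 0 := fun h => hv'ne (inner_self_eq_zero.1 h)
  have hw'w' : ⟪w', w'⟫ ≠ 0 := fun h => hw'ne (inner_self_eq_zero.1 h)
  have hsplitv : v = v' + (⟪w, v⟫ / ⟪w, w⟫) • w := by rw [hv'def]; abel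
  have hsplitw : w = w' + (⟪v, w⟫ / ⟪v, v⟫) • v := by rw [hw'def]; abel
  have hvv' : ⟪v', v⟫ = ⟪v', v'⟫ := by
    calc ⟪v', v⟫ = ⟪v', v' + (⟪w, v⟫ / ⟪w, w⟫) • w⟫ := by rw [← hsplitv]
    _ = ⟪v', v'⟫ + (⟪w, v⟫ / ⟪w, w⟫) * ⟪v', w⟫ := by
        rw [inner_add_right, real_inner_smul_right]
    _ = ⟪v', v'⟫ := by rw [hv'w, mul_zero, add_zero]
  have hww' : ⟪w', w⟫ = ⟪w', w'⟫ := by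
    calc ⟪w', w⟫ = ⟪w', w' + (⟪v, w⟫ / ⟪v, v⟫) • v⟫ := by rw [← hsplitw]
    _ = ⟪w', w'⟫ + (⟪v, w⟫ / ⟪v, v⟫) * ⟪w', v⟫ := by
        rw [inner_add_right, real_inner_smul_right]
    _ = ⟪w', w'⟫ := by rw [hw'v, mul_zero, add_zero]
  refine ⟨(⟪v', v'⟫)⁻¹ • innerSL ℝ v', (⟪w', w'⟫)⁻¹ • innerSL ℝ w', ?_, ?_, ?_, ?_⟩
  · simp only [ContinuousLinearMap.smul_apply, innerSL_apply_apply, smul_eq_mul]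
    rw [hvv', inv_mul_cancel₀ hv'v']
  · simp only [ContinuousLinearMap.smul_apply, innerSL_apply_apply, smul_eq_mul]
    rw [hv'w, mul_zero]
  · simp only [ContinuousLinearMap.smul_apply, innerSL_apply_apply, smul_eq_mul]
    rw [hw'v, mul_zero]
  · simp only [ContinuousLinearMap.smul_apply, innerSL_apply_apply, smul_eq_mul]
    rw [hww', inv_mul_cancel₀ hw'w']

private lemma aux_key {S : Set ℝ} (hS : IsOpen S) (h0S : (0:ℝ) ∈ S)
    {a b da db d2a d2b : ℝ → ℝ}
    (ha0 : a 0 = 0) (hb0 : b 0 = 0)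
    (hda : ∀ t ∈ S, HasDerivAt a (da t) t) (hdb : ∀ t ∈ S, HasDerivAt b (db t) t)
    (hd2a : ∀ t ∈ S, HasDerivAt da (d2a t) t) (hd2b : ∀ t ∈ S, HasDerivAt db (d2b t) t)
    (hc2a : ContinuousOn d2a S) (hc2b : ContinuousOn d2b S)
    (hda0 : da 0 = 1) (hdb0 : db 0 = 0) (hd2b0 : d2b 0 = 1) :
    ∃ ε > 0, Ioo (-ε) ε ⊆ S ∧ ∀ s ∈ Ioo (-ε) ε, ∀ t ∈ Ioo (-ε) ε,
      s ≠ t → s ≠ 0 → t ≠ 0 → b s * a t ≠ b t * a s := by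
  set K : ℝ := |d2a 0| + 1 with hKdef
  have hK : 0 < K := by positivity
  -- eventual conditions near 0
  have hSnhds : S ∈ 𝓝 (0:ℝ) := hS.mem_nhds h0S
  have E1 : ∀ᶠ t in 𝓝 (0:ℝ), t ∈ S := hSnhds
  have E2 : ∀ᶠ t in 𝓝 (0:ℝ), (1:ℝ)/2 ≤ d2b t := by
    have hcont : Filter.Tendsto d2b (𝓝 0) (𝓝 1) := by
      have := (hc2b.continuousAt hSnhds).tendsto
      rwa [hd2b0] at this
    exact hcont.eventually (eventually_ge_nhds (by norm_num))
  have E3 : ∀ᶠ t in 𝓝 (0:ℝ), (1:ℝ)/2 ≤ da t := by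
    have hcont : Filter.Tendsto da (𝓝 0) (𝓝 1) := by
      have := (hd2a 0 h0S).continuousAt.tendsto
      rwa [hda0] at this
    exact hcont.eventually (eventually_ge_nhds (by norm_num))
  have E4 : ∀ᶠ t in 𝓝 (0:ℝ), |d2a t| ≤ K := by
    have hcont : Filter.Tendsto (fun t => |d2a t|) (𝓝 0) (𝓝 |d2a 0|) :=
      (hc2a.continuousAt hSnhds).abs.tendsto
    exact hcont.eventually (eventually_le_nhds (by rw [hKdef]; linarith))
  have E5 : ∀ᶠ t in 𝓝 (0:ℝ), |b t| * (8 * K) ≤ |t| := by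
    have hslope : Filter.Tendsto (fun t => |slope b 0 t|) (𝓝[≠] (0:ℝ)) (𝓝 0) := by
      have := (hasDerivAt_iff_tendsto_slope.1 (hdb 0 h0S)).abs
      rwa [hdb0, abs_zero] at this
    have h8 : (0:ℝ) < 1 / (8 * K) := by positivity
    have := hslope.eventually (eventually_le_nhds h8)
    rw [eventually_nhdsWithin_iff] at this
    filter_upwards [this] with t h
    rcases eq_or_ne t 0 with rfl | ht0
    · simp [hb0]
    · have hs := h (by simpa using ht0)
      rw [slope_def_field, hb0, sub_zero, sub_zero, abs_div] at hs
      have htpos : 0 < |t| := abs_pos.2 ht0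
      have := (div_le_div_iff₀ htpos (by positivity)).1 hs
      linarith
  obtain ⟨ε, hε, hball⟩ := Metric.eventually_nhds_iff.1 ((((E1.and E2).and (E3.and E4)).and E5))
  have hI : ∀ t ∈ Ioo (-ε) ε, t ∈ S ∧ ((1:ℝ)/2 ≤ d2b t) ∧ ((1:ℝ)/2 ≤ da t) ∧
      |d2a t| ≤ K ∧ |b t| * (8 * K) ≤ |t| := by
    intro t ht
    have : dist t 0 < ε := by rw [Real.dist_eq, sub_zero, abs_lt]; exact ⟨ht.1, ht.2⟩
    obtain ⟨⟨⟨p1, p2⟩, ⟨p3, p4⟩⟩, p5⟩ := hball this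
    exact ⟨p1, p2, p3, p4, p5⟩
  have hsubS : Ioo (-ε) ε ⊆ S := fun t ht => (hI t ht).1
  refine ⟨ε, hε, hsubS, ?_⟩
  -- sign of a
  have haS : ∀ t ∈ Ioo (-ε) ε, HasDerivAt a (da t) t := fun t ht => hda t (hsubS ht)
  have hbS : ∀ t ∈ Ioo (-ε) ε, HasDerivAt b (db t) t := fun t ht => hdb t (hsubS ht)
  have hdbS : ∀ t ∈ Ioo (-ε) ε, HasDerivAt db (d2b t) t := fun t ht => hd2b t (hsubS ht)
  have ha_sign := auxL1 hε ha0 haS (fun t ht => (hI t ht).2.2.1)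
  have hdb_sign := auxL1 hε hdb0 hdbS (fun t ht => (hI t ht).2.1)
  have hb_pos : ∀ t ∈ Ioo (-ε) ε, t ≠ 0 → 0 < b t := by
    apply auxL2 hb0 hbS
    · intro t ht ht0
      have := (hdb_sign t ht).1 ht0.le; linarith
    · intro t ht ht0
      have := (hdb_sign t ht).2 ht0.le; linarith
  -- N and its derivative
  have hNd : ∀ t ∈ Ioo (-ε) ε,
      HasDerivAt (fun t => db t * a t - b t * da t) (d2b t * a t - b t * d2a t) t := by
    intro t ht
    have h1 := (hdbS t ht).mul (haS t ht)
    have h2 := (hbS t ht).mul (hd2a t (hsubS ht))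
    have := h1.sub h2
    exact this.congr_deriv (by ring)
  have hN0 : db 0 * a 0 - b 0 * da 0 = 0 := by rw [ha0, hb0]; ring
  have habs : ∀ t ∈ Ioo (-ε) ε, |b t * d2a t| ≤ |t| / 8 := by
    intro t ht
    obtain ⟨-, -, -, h4, h5⟩ := hI t ht
    rw [abs_mul]
    have h1 : |b t| * |d2a t| ≤ |b t| * K := by
      apply mul_le_mul_of_nonneg_left h4 (abs_nonneg _)
    nlinarith [abs_nonneg (b t)]
  have hN_pos : ∀ t ∈ Ioo (-ε) ε, t ≠ 0 → 0 < db t * a t - b t * da t := by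
    apply auxL2 hN0 hNd
    · intro t ht ht0
      obtain ⟨-, h2, -, -, -⟩ := hI t ht
      have ha := (ha_sign t ht).1 ht0.le
      have hb := (habs t ht)
      rw [abs_of_pos ht0] at hb
      have hq : 1/2 * (t/2) ≤ d2b t * a t :=
        mul_le_mul h2 ha (by linarith) (by linarith)
      have := (abs_le.1 hb).2
      linarith
    · intro t ht ht0
      obtain ⟨-, h2, -, -, -⟩ := hI t ht
      have ha := (ha_sign t ht).2 ht0.le
      have hb := (habs t ht)
      rw [abs_of_neg ht0] at hb
      have hq : d2b t * a t ≤ 1/2 * a t :=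
        mul_le_mul_of_nonpos_right h2 (by linarith)
      have := (abs_le.1 hb).1
      linarith
  -- strict monotonicity of b/a on each side
  have hmono_pos : StrictMonoOn (fun t => b t / a t) (Ioo 0 ε) := by
    have hsub : Ioo (0:ℝ) ε ⊆ Ioo (-ε) ε := Ioo_subset_Ioo (by linarith) le_rfl
    have hane : ∀ x ∈ Ioo (0:ℝ) ε, a x ≠ 0 := by
      intro x hx
      have h1 := (ha_sign x (hsub hx)).1 hx.1.le
      have h2 := hx.1
      exact ne_of_gt (by linarith)
    have hder : ∀ x ∈ Ioo (0:ℝ) ε, HasDerivAt (fun t => b t / a t)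
        ((db x * a x - b x * da x) / (a x) ^ 2) x :=
      fun x hx => (hbS x (hsub hx)).div (haS x (hsub hx)) (hane x hx)
    apply strictMonoOn_of_deriv_pos (convex_Ioo _ _)
    · exact fun x hx => (hder x hx).continuousAt.continuousWithinAt
    · intro x hx
      rw [interior_Ioo] at hx
      rw [(hder x hx).deriv]
      exact div_pos (hN_pos x (hsub hx) (ne_of_gt hx.1)) (pow_two_pos_of_ne_zero (hane x hx))
  have hmono_neg : StrictMonoOn (fun t => b t / a t) (Ioo (-ε) 0) := by
    have hsub : Ioo (-ε) (0:ℝ) ⊆ Ioo (-ε) ε := Ioo_subset_Ioo le_rfl (by linarith)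
    have hane : ∀ x ∈ Ioo (-ε) (0:ℝ), a x ≠ 0 := by
      intro x hx
      have h1 := (ha_sign x (hsub hx)).2 hx.2.le
      have h2 := hx.2
      exact ne_of_lt (by linarith)
    have hder : ∀ x ∈ Ioo (-ε) (0:ℝ), HasDerivAt (fun t => b t / a t)
        ((db x * a x - b x * da x) / (a x) ^ 2) x :=
      fun x hx => (hbS x (hsub hx)).div (haS x (hsub hx)) (hane x hx)
    apply strictMonoOn_of_deriv_pos (convex_Ioo _ _)
    · exact fun x hx => (hder x hx).continuousAt.continuousWithinAt
    · intro x hx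
      rw [interior_Ioo] at hx
      rw [(hder x hx).deriv]
      exact div_pos (hN_pos x (hsub hx) (ne_of_lt hx.2)) (pow_two_pos_of_ne_zero (hane x hx))
  -- conclusion
  intro s hs t ht hst hs0 ht0 heq
  have hbs := hb_pos s hs hs0
  have hbt := hb_pos t ht ht0
  have haspos : 0 < s → 0 < a s := fun h => lt_of_lt_of_le (by linarith) ((ha_sign s hs).1 h.le)
  have hasneg : s < 0 → a s < 0 := fun h => lt_of_le_of_lt ((ha_sign s hs).2 h.le) (by linarith)
  have hatpos : 0 < t → 0 < a t := fun h => lt_of_lt_of_le (by linarith) ((ha_sign t ht).1 h.le)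
  have hatneg : t < 0 → a t < 0 := fun h => lt_of_le_of_lt ((ha_sign t ht).2 h.le) (by linarith)
  rcases hs0.lt_or_gt with hsneg | hspos <;> rcases ht0.lt_or_gt with htneg | htpos
  · -- both negative
    have h1 : a s ≠ 0 := ne_of_lt (hasneg hsneg)
    have h2 : a t ≠ 0 := ne_of_lt (hatneg htneg)
    have : b s / a s = b t / a t := (div_eq_div_iff h1 h2).2 heq
    exact hst (hmono_neg.injOn ⟨hs.1, hsneg⟩ ⟨ht.1, htneg⟩ this)
  · -- s < 0 < t
    have h1 : b s * a t > 0 := mul_pos hbs (hatpos htpos)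
    have h2 : b t * a s < 0 := mul_neg_of_pos_of_neg hbt (hasneg hsneg)
    linarith
  · -- t < 0 < s
    have h1 : b s * a t < 0 := mul_neg_of_pos_of_neg hbs (hatneg htneg)
    have h2 : b t * a s > 0 := mul_pos hbt (haspos hspos)
    linarith
  · -- both positive
    have h1 : a s ≠ 0 := ne_of_gt (haspos hspos)
    have h2 : a t ≠ 0 := ne_of_gt (hatpos htpos)
    have : b s / a s = b t / a t := (div_eq_div_iff h1 h2).2 heq
    exact hst (hmono_pos.injOn ⟨hspos, hs.2⟩ ⟨htpos, ht.2⟩ this)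

/-- a C² curve γ : (-δ,δ) → ℝⁿ with γ(0)=0, γ'(0) ≠ 0.
(a) If γ''(0) ≠ 0 and γ''(0) is not parallel to γ'(0), then on a small enough
interval (-ε,ε) the curve meets every line through the origin in at most two
points.  (b) Consequently, if for arbitrarily small ε there is a line through 0
containing the three distinct points γ(-ε), 0, γ(ε), then γ''(0) is a multiple
of γ'(0). -/
theorem stmt14 {n : ℕ} (δ : ℝ) (hδ : 0 < δ)
    (γ : ℝ → EuclideanSpace ℝ (Fin n))
    (hγ : ContDiffOn ℝ 2 γ (Ioo (-δ) δ))
    (h0 : γ 0 = 0)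
    (h1 : derivWithin γ (Ioo (-δ) δ) 0 ≠ 0) :
    ((derivWithin (derivWithin γ (Ioo (-δ) δ)) (Ioo (-δ) δ) 0 ≠ 0 ∧
      ∀ c : ℝ, derivWithin (derivWithin γ (Ioo (-δ) δ)) (Ioo (-δ) δ) 0 ≠
        c • derivWithin γ (Ioo (-δ) δ) 0) →
      ∃ ε > 0, ε ≤ δ ∧
        ∀ L : Submodule ℝ (EuclideanSpace ℝ (Fin n)), Module.finrank ℝ L = 1 →
          (γ '' Ioo (-ε) ε ∩ (L : Set (EuclideanSpace ℝ (Fin n)))).encard ≤ 2) ∧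
    ((∀ ε : ℝ, 0 < ε → ε < δ →
        ∃ L : Submodule ℝ (EuclideanSpace ℝ (Fin n)), Module.finrank ℝ L = 1 ∧
          γ (-ε) ∈ L ∧ γ ε ∈ L ∧ γ (-ε) ≠ 0 ∧ γ ε ≠ 0 ∧ γ (-ε) ≠ γ ε) →
      ∃ c : ℝ, derivWithin (derivWithin γ (Ioo (-δ) δ)) (Ioo (-δ) δ) 0 =
        c • derivWithin γ (Ioo (-δ) δ) 0) := by
  set S : Set ℝ := Ioo (-δ) δ with hSdef
  set f1 : ℝ → EuclideanSpace ℝ (Fin n) := derivWithin γ S with hf1def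
  set f2 : ℝ → EuclideanSpace ℝ (Fin n) := derivWithin f1 S with hf2def
  have hSopen : IsOpen S := isOpen_Ioo
  have h0S : (0:ℝ) ∈ S := ⟨by linarith, hδ⟩
  have hud : UniqueDiffOn ℝ S := hSopen.uniqueDiffOn
  have hγd : ∀ t ∈ S, HasDerivAt γ (f1 t) t := by
    intro t ht
    have hd : DifferentiableWithinAt ℝ γ S t := (hγ.differentiableOn (by norm_num)) t ht
    have := (hd.differentiableAt (hSopen.mem_nhds ht)).hasDerivAt
    rwa [hf1def, derivWithin_of_isOpen hSopen ht]
  have hf1C : ContDiffOn ℝ 1 f1 S := hγ.derivWithin (m := 1) hud (by norm_num)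
  have hf1d : ∀ t ∈ S, HasDerivAt f1 (f2 t) t := by
    intro t ht
    have hd : DifferentiableWithinAt ℝ f1 S t := (hf1C.differentiableOn (by norm_num)) t ht
    have := (hd.differentiableAt (hSopen.mem_nhds ht)).hasDerivAt
    rwa [hf2def, derivWithin_of_isOpen hSopen ht]
  have hf2c : ContinuousOn f2 S := (hf1C.derivWithin (m := 0) hud (by norm_num)).continuousOn
  have partA : (f2 0 ≠ 0 ∧ ∀ c : ℝ, f2 0 ≠ c • f1 0) →
      ∃ ε > 0, ε ≤ δ ∧
        ∀ L : Submodule ℝ (EuclideanSpace ℝ (Fin n)), Module.finrank ℝ L = 1 →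
          (γ '' Ioo (-ε) ε ∩ (L : Set (EuclideanSpace ℝ (Fin n)))).encard ≤ 2 := by
    rintro ⟨hw, hnp⟩
    obtain ⟨α, β, hαv, hαw, hβv, hβw⟩ := exists_dual_pair h1 hw hnp
    have hda : ∀ t ∈ S, HasDerivAt (α ∘ γ) (α (f1 t)) t :=
      fun t ht => α.hasFDerivAt.comp_hasDerivAt t (hγd t ht)
    have hdb : ∀ t ∈ S, HasDerivAt (β ∘ γ) (β (f1 t)) t :=
      fun t ht => β.hasFDerivAt.comp_hasDerivAt t (hγd t ht)
    have hd2a : ∀ t ∈ S, HasDerivAt (fun t => α (f1 t)) (α (f2 t)) t :=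
      fun t ht => α.hasFDerivAt.comp_hasDerivAt t (hf1d t ht)
    have hd2b : ∀ t ∈ S, HasDerivAt (fun t => β (f1 t)) (β (f2 t)) t :=
      fun t ht => β.hasFDerivAt.comp_hasDerivAt t (hf1d t ht)
    have hc2a : ContinuousOn (fun t => α (f2 t)) S := α.continuous.comp_continuousOn hf2c
    have hc2b : ContinuousOn (fun t => β (f2 t)) S := β.continuous.comp_continuousOn hf2c
    have ha0 : (α ∘ γ) 0 = 0 := by show α (γ 0) = 0; rw [h0, map_zero]
    have hb0 : (β ∘ γ) 0 = 0 := by show β (γ 0) = 0; rw [h0, map_zero]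
    obtain ⟨ε₀, hε₀, hsubS, hkey⟩ :=
      aux_key hSopen h0S ha0 hb0 hda hdb hd2a hd2b hc2a hc2b hαv hβv hβw
    refine ⟨min ε₀ δ, lt_min hε₀ hδ, min_le_right _ _, ?_⟩
    intro L hL
    have hIsub : Ioo (-(min ε₀ δ)) (min ε₀ δ) ⊆ Ioo (-ε₀) ε₀ :=
      Ioo_subset_Ioo (neg_le_neg (min_le_left _ _)) (min_le_left _ _)
    set T := γ '' Ioo (-(min ε₀ δ)) (min ε₀ δ) ∩ (L : Set (EuclideanSpace ℝ (Fin n))) with hTdef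
    have key2 : ∀ x ∈ T, ∀ y ∈ T, x ≠ 0 → y ≠ 0 → x = y := by
      rintro x ⟨⟨s, hsI, rfl⟩, hxL⟩ y ⟨⟨t, htI, rfl⟩, hyL⟩ hx0 hy0
      by_contra hxy
      have hst : s ≠ t := fun h => hxy (by rw [h])
      have hs0 : s ≠ 0 := fun h => hx0 (by rw [h, h0])
      have ht0 : t ≠ 0 := fun h => hy0 (by rw [h, h0])
      have hsp : Submodule.span ℝ {γ t} ≤ L := by
        rw [Submodule.span_le, Set.singleton_subset_iff]; exact hyL
      have hfr : Module.finrank ℝ (Submodule.span ℝ ({γ t} : Set (EuclideanSpace ℝ (Fin n)))) = 1 :=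
        finrank_span_singleton hy0
      have hLsp : Submodule.span ℝ {γ t} = L :=
        Submodule.eq_of_le_of_finrank_le hsp (by rw [hL, hfr])
      have hxs : γ s ∈ Submodule.span ℝ ({γ t} : Set (EuclideanSpace ℝ (Fin n))) := by
        rw [hLsp]; exact hxL
      obtain ⟨c, hc⟩ := Submodule.mem_span_singleton.1 hxs
      refine hkey s (hIsub hsI) t (hIsub htI) hst hs0 ht0 ?_
      have h1' : (α ∘ γ) s = c * (α ∘ γ) t := by
        show α (γ s) = c * α (γ t); rw [← hc, map_smul]; rfl
      have h2' : (β ∘ γ) s = c * (β ∘ γ) t := by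
        show β (γ s) = c * β (γ t); rw [← hc, map_smul]; rfl
      rw [h1', h2']; ring
    by_cases hT : ∀ x ∈ T, x = (0 : EuclideanSpace ℝ (Fin n))
    · have hsub1 : T ⊆ {0} := fun x hx => hT x hx
      exact le_trans (Set.encard_mono hsub1) (by rw [Set.encard_singleton]; exact one_le_two)
    · push_neg at hT
      obtain ⟨p, hpT, hp0⟩ := hT
      have hsub2 : T ⊆ {0, p} := by
        intro x hx
        by_cases hx0 : x = 0
        · exact Or.inl hx0
        · exact Or.inr (key2 x hx p hpT hx0 hp0)
      exact le_trans (Set.encard_mono hsub2)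
        (le_of_eq (Set.encard_pair (Ne.symm hp0)))
  refine ⟨partA, ?_⟩
  intro hyp
  by_contra hc
  push_neg at hc
  have hw : f2 0 ≠ 0 := fun h => hc 0 (by rw [h, zero_smul])
  obtain ⟨ε, hε, hεδ, hA⟩ := partA ⟨hw, hc⟩
  have h1' : 0 < ε / 2 := by linarith
  have h2' : ε / 2 < δ := by linarith
  obtain ⟨L, hL1, hmL, hpL, hm0, hp0', hne⟩ := hyp (ε/2) h1' h2'
  have hAL := hA L hL1
  have hsub : ({0, γ (-(ε/2)), γ (ε/2)} : Set (EuclideanSpace ℝ (Fin n))) ⊆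
      γ '' Ioo (-ε) ε ∩ (L : Set (EuclideanSpace ℝ (Fin n))) := by
    rintro x (rfl | rfl | rfl)
    · exact ⟨⟨0, ⟨by linarith, hε⟩, h0⟩, L.zero_mem⟩
    · exact ⟨⟨-(ε/2), ⟨by linarith, by linarith⟩, rfl⟩, hmL⟩
    · exact ⟨⟨ε/2, ⟨by linarith, by linarith⟩, rfl⟩, hpL⟩
  have h3 : ({0, γ (-(ε/2)), γ (ε/2)} : Set (EuclideanSpace ℝ (Fin n))).encard = 3 := by
    rw [Set.encard_insert_of_notMem (by simp [Ne.symm hm0, Ne.symm hp0'])]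
    rw [Set.encard_pair hne]
    rfl
  have hfin := (Set.encard_mono hsub).trans hAL
  rw [h3] at hfin
  norm_num at hfin
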